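/- Let T > 0, M ≥ 0 and β ∈ ℝ. Let m : [0,T] → ℝ be continuous with m(t) ≥ m(0) + β·t for all t ∈ [0,T], and let w : [0,T] → ℝ be continuously differentiable with |w(t)| ≤ M for all t ∈ [0,T] and m(t) ≤ w′(t) for all t ∈ [0,T]. Then m(0) + β·T/2 − 2M/T ≤ 0. -/

import Mathlib

open MeasureTheory Set

/-- Analytic core of the Appendix proposition (case `α = 0`): if the expectation `m`
of the barrier function satisfies the linear lower bound and is dominated by the
derivative of a bounded, continuously differentiable time-only auxiliary function `w`,
then the candidate lower bound on the reach-avoid probability is nonpositive. -/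
theorem appendix_bound_nonpositive_zero
    (T M β : ℝ) (hT : 0 < T) (hM : 0 ≤ M)
    (m w w' : ℝ → ℝ)
    (hm : ContinuousOn m (Icc 0 T))
    (hmlb : ∀ t ∈ Icc 0 T, m 0 + β * t ≤ m t)
    (hw : ∀ t ∈ Icc 0 T, HasDerivAt w (w' t) t)
    (hw' : ContinuousOn w' (Icc 0 T))
    (hwb : ∀ t ∈ Icc 0 T, |w t| ≤ M)
    (hmw : ∀ t ∈ Icc 0 T, m t ≤ w' t) :
    m 0 + β * T / 2 - 2 * M / T ≤ 0 := by
  have huIcc : uIcc (0:ℝ) T = Icc 0 T := uIcc_of_le hT.le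
  have hmi : IntervalIntegrable m volume 0 T := by
    apply ContinuousOn.intervalIntegrable; rwa [huIcc]
  have hw'i : IntervalIntegrable w' volume 0 T := by
    apply ContinuousOn.intervalIntegrable; rwa [huIcc]
  have hftc : ∫ t in (0:ℝ)..T, w' t = w T - w 0 := by
    apply intervalIntegral.integral_eq_sub_of_hasDerivAt
    · intro t ht; exact hw t (huIcc ▸ ht)
    · exact hw'i
  have h1 : ∫ t in (0:ℝ)..T, (m 0 + β * t) ≤ ∫ t in (0:ℝ)..T, m t := by
    apply intervalIntegral.integral_mono_on hT.le _ hmi hmlb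
    exact (intervalIntegrable_const).add
      (intervalIntegrable_const.mul_continuousOn (by fun_prop))
  have h2 : ∫ t in (0:ℝ)..T, m t ≤ ∫ t in (0:ℝ)..T, w' t :=
    intervalIntegral.integral_mono_on hT.le hmi hw'i hmw
  have h3 : ∫ t in (0:ℝ)..T, (m 0 + β * t) = m 0 * T + β * (T^2 / 2) := by
    rw [intervalIntegral.integral_add intervalIntegrable_const
      (intervalIntegrable_const.mul_continuousOn (by fun_prop)),
      intervalIntegral.integral_const, intervalIntegral.integral_const_mul,
      integral_id]
    simp [smul_eq_mul]; ring
  have h4 : w T - w 0 ≤ 2 * M := by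
    have hT' := hwb T (by constructor <;> linarith)
    have h0 := hwb 0 (by constructor <;> [rfl; exact hT.le])
    rw [abs_le] at hT' h0; linarith
  have key : m 0 * T + β * (T^2/2) ≤ 2 * M := by
    rw [← h3]; linarith [h1, h2, hftc ▸ h4]
  rw [sub_nonpos, ← mul_le_mul_iff_of_pos_right hT, div_mul_cancel₀ _ hT.ne']
  nlinarith [key]
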